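/- A vector (c_1,…,c_d) of positive integers is the clique vector of a k-connected threshold graph if and only if the vector (b_1,…,b_d) defined by Σ_{i=1}^d b_i·x^{i-1} = Σ_{i=1}^d c_i·(x−1)^{i-1} has all components positive and b_1 = b_2 = … = b_k = 1. -/

import Mathlib

open Finset

/-- Number of cliques of `G` with exactly `i` vertices. -/
noncomputable def cliqueCount {V : Type*} (G : SimpleGraph V) (i : ℕ) : ℕ :=
  {s : Finset V | G.IsNClique i s}.ncard

/-- Clique number: the largest cardinality of a clique of `G`. -/
noncomputable def cliqueNum {V : Type*} (G : SimpleGraph V) : ℕ :=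
  sSup {i : ℕ | ∃ s : Finset V, G.IsNClique i s}

/-- `G` is `k`-connected: it has at least `k` vertices and removing any set of
fewer than `k` vertices leaves a connected graph. -/
def KConnected {V : Type*} [Fintype V] (G : SimpleGraph V) (k : ℕ) : Prop :=
  k ≤ Fintype.card V ∧
    ∀ s : Finset V, s.card < k → (G.induce ((↑s : Set V)ᶜ)).Connected

/-- The connectivity number `κ(G)`: the largest `k` such that `G` is `k`-connected. -/
noncomputable def connectivityNum {V : Type*} [Fintype V] (G : SimpleGraph V) : ℕ :=
  sSup {k : ℕ | KConnected G k}

/-- A graph is chordal if every cycle of length at least four has a chord. -/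
def IsChordal {V : Type*} (G : SimpleGraph V) : Prop :=
  ∀ (v : V) (c : G.Walk v v), c.IsCycle → 4 ≤ c.length →
    ∃ u w, u ∈ c.support ∧ w ∈ c.support ∧ G.Adj u w ∧ s(u, w) ∉ c.edges

/-- The threshold graph built from a word in the alphabet `{S, D}` (here
`true` = `S`, `false` = `D`), where the leftmost letter is the last operation
performed.  Vertex `i` corresponds to the `i`-th letter; two vertices are
adjacent iff the earlier (smaller-index, i.e. later-added) one is a dominating
vertex. -/
def thresholdGraph (w : List Bool) : SimpleGraph (Fin w.length) where
  Adj i j := i ≠ j ∧ w.get (min i j) = true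
  symm := ⟨fun i j h => ⟨h.1.symm, by rw [min_comm]; exact h.2⟩⟩
  loopless := ⟨fun i h => h.1 rfl⟩

/-- A valid threshold word: the final (rightmost) letter, i.e. the first
operation performed, is `S`. -/
def IsThresholdWord (w : List Bool) : Prop := w ≠ [] → w.getLast? = some true

/-- A graph is a threshold graph if it is isomorphic to the graph of some
threshold word. -/
def IsThresholdGraph {V : Type*} (G : SimpleGraph V) : Prop :=
  ∃ w : List Bool, IsThresholdWord w ∧ Nonempty (G ≃g thresholdGraph w)

/-- An abstract simplicial complex on vertex set `V`. -/
structure AbsCx (V : Type*) where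
  faces : Set (Finset V)
  down_closed : ∀ ⦃s t : Finset V⦄, s ∈ faces → t ⊆ s → t ∈ faces

/-- The clique complex of a graph: its faces are the cliques. -/
def cliqueComplex {V : Type*} (G : SimpleGraph V) : AbsCx V :=
  ⟨{s | G.IsClique (↑s : Set V)}, fun s t hs hts => hs.subset (Finset.coe_subset.mpr hts)⟩

/-- The induced subcomplex on a vertex subset `W`. -/
def AbsCx.restrict {V : Type*} (K : AbsCx V) (W : Set V) : AbsCx V :=
  ⟨{s | s ∈ K.faces ∧ (↑s : Set V) ⊆ W},
   fun s t hs hts =>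
     ⟨K.down_closed hs.1 hts, le_trans (Finset.coe_subset.mpr hts) hs.2⟩⟩

/-- A complex is flag if every minimal non-face has exactly two elements. -/
def AbsCx.IsFlag {V : Type*} (K : AbsCx V) : Prop :=
  ∀ s : Finset V, s ∉ K.faces → (∀ t ⊂ s, t ∈ K.faces) → s.card = 2

/-- A complex on `Fin n` is shifted if exchanging a vertex of a face by a
smaller vertex not in the face again yields a face. -/
def AbsCx.IsShifted {n : ℕ} (K : AbsCx (Fin n)) : Prop :=
  ∀ s ∈ K.faces, ∀ i ∈ s, ∀ j, j ∉ s → j < i → insert j (s.erase i) ∈ K.faces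

/-- Faces of (integer) dimension `d`, i.e. of cardinality `d + 1`. -/
def AbsCx.dimFaces {V : Type*} (K : AbsCx V) (d : ℤ) : Type _ :=
  {s : Finset V // s ∈ K.faces ∧ (s.card : ℤ) = d + 1}

/-- The simplicial (augmented) boundary map of a complex, on `d`-dimensional
chains with coefficients in `𝕜`. -/
noncomputable def chainBoundary {V : Type*} [LinearOrder V] (K : AbsCx V)
    (𝕜 : Type*) [Field 𝕜] (d : ℤ) :
    (K.dimFaces d →₀ 𝕜) →ₗ[𝕜] (K.dimFaces (d - 1) →₀ 𝕜) :=
  Finsupp.lsum 𝕜 fun F =>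
    LinearMap.toSpanSingleton 𝕜 _
      (∑ v ∈ F.1.attach,
        ((-1 : 𝕜) ^ (F.1.filter (fun x => x < v.1)).card) •
          Finsupp.single
            (⟨F.1.erase v.1,
              K.down_closed F.2.1 (Finset.erase_subset _ _),
              by
                obtain ⟨hf, hc⟩ := F.2
                have h1 : 1 ≤ F.1.card := Finset.card_pos.mpr ⟨v.1, v.2⟩
                rw [Finset.card_erase_of_mem v.2, Nat.cast_sub h1]
                omega⟩ : K.dimFaces (d - 1))
            (1 : 𝕜))

/-- The dimension of the `d`-th reduced simplicial homology of `K` with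
coefficients in `𝕜` (computed as `dim ker ∂_d − dim im ∂_{d+1}`). -/
noncomputable def AbsCx.homDim {V : Type*} [LinearOrder V] (𝕜 : Type*) [Field 𝕜]
    (K : AbsCx V) (d : ℤ) : ℕ :=
  Module.finrank 𝕜 (LinearMap.ker (chainBoundary K 𝕜 d)) -
    Module.finrank 𝕜 (LinearMap.range (chainBoundary K 𝕜 (d + 1)))

/-- The graded Betti numbers `β_{i,j}` of the Stanley–Reisner ring `𝕜[K]`,
given by Hochster's formula: `β_{i,j} = Σ_{|W| = j} dim_𝕜 H̃_{j-i-1}(K_W)`. -/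
noncomputable def srBetti (𝕜 : Type*) [Field 𝕜] {n : ℕ} (K : AbsCx (Fin n))
    (i j : ℕ) : ℕ :=
  ∑ W ∈ Finset.powersetCard j (Finset.univ : Finset (Fin n)),
    AbsCx.homDim 𝕜 (K.restrict (↑W : Set (Fin n))) ((j : ℤ) - i - 1)

/-- The projective dimension of the Stanley–Reisner ring `𝕜[K]` over the
polynomial ring: the largest homological degree with a nonzero Betti number. -/
noncomputable def srProjDim (𝕜 : Type*) [Field 𝕜] {n : ℕ} (K : AbsCx (Fin n)) : ℕ :=
  sSup {i : ℕ | ∃ j : ℕ, srBetti 𝕜 K i j ≠ 0}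

/-- The depth of the Stanley–Reisner ring `𝕜[K]`, via the
Auslander–Buchsbaum formula `depth = n − projdim`. -/
noncomputable def srDepth (𝕜 : Type*) [Field 𝕜] {n : ℕ} (K : AbsCx (Fin n)) : ℕ :=
  n - srProjDim 𝕜 K

/-- The lengths of the blocks obtained by splitting a threshold word
immediately after each `S` (= `true`); the `b`-vector of the word. -/
def blocks : List Bool → List ℕ
  | [] => []
  | true :: rest => 1 :: blocks rest
  | false :: rest =>
    match blocks rest with
    | [] => []
    | b :: bs => (b + 1) :: bs

/-- One plus the dimension of a complex: the largest cardinality of a face. -/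
noncomputable def AbsCx.dimPlusOne {V : Type*} (K : AbsCx V) : ℕ :=
  sSup {c : ℕ | ∃ s ∈ K.faces, s.card = c}

/-- `K` is Cohen–Macaulay over `𝕜` iff the depth of `𝕜[K]` equals its Krull
dimension `dim K + 1`. -/
def IsCohenMacaulay (𝕜 : Type*) [Field 𝕜] {n : ℕ} (K : AbsCx (Fin n)) : Prop :=
  srDepth 𝕜 K = K.dimPlusOne

/-- The Alexander dual complex. -/
def AbsCx.dual {n : ℕ} (K : AbsCx (Fin n)) : AbsCx (Fin n) :=
  ⟨{s | Finset.univ \ s ∉ K.faces},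
   fun s t hs hts h => hs (K.down_closed h (Finset.sdiff_subset_sdiff (le_refl _) hts))⟩

/-- The number of faces of `K` with exactly `i` vertices (the `f`-vector). -/
noncomputable def AbsCx.faceCount {V : Type*} (K : AbsCx V) (i : ℕ) : ℕ :=
  {s ∈ K.faces | s.card = i}.ncard
namespace TAux

variable (w : List Bool)

/-- S positions strictly below `j`. -/
def Sbelow (j : Fin w.length) : Finset (Fin w.length) :=
  univ.filter (fun p => p < j ∧ w.get p = true)

def rr (j : Fin w.length) : ℕ := (Sbelow w j).card

def Sfin : Finset (Fin w.length) := univ.filter (fun p => w.get p = true)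

def tt : ℕ := (Sfin w).card

lemma isClique_iff (s : Finset (Fin w.length)) :
    (thresholdGraph w).IsClique (↑s : Set (Fin w.length)) ↔
      ∀ p ∈ s, ∀ q ∈ s, p < q → w.get p = true := by
  constructor
  · intro h p hp q hq hpq
    have := h (by exact_mod_cast hp) (by exact_mod_cast hq) (ne_of_lt hpq)
    rcases (this : p ≠ q ∧ w.get (min p q) = true) with ⟨-, h2⟩
    rwa [min_eq_left hpq.le] at h2
  · intro h p hp q hq hne
    rcases lt_or_gt_of_ne hne with hlt | hgt
    · exact (⟨hne, by rw [min_eq_left hlt.le]; exact h p (by exact_mod_cast hp) q (by exact_mod_cast hq) hlt⟩ : p ≠ q ∧ w.get (min p q) = true)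
    · exact (⟨hne, by rw [min_eq_right hgt.le]; exact h q (by exact_mod_cast hq) p (by exact_mod_cast hp) hgt⟩ : p ≠ q ∧ w.get (min p q) = true)

instance (w : List Bool) : DecidableRel (thresholdGraph w).Adj :=
  fun i j => (inferInstance : Decidable (i ≠ j ∧ w.get (min i j) = true))

lemma cliqueCount_eq_card {V : Type*} [Fintype V] [DecidableEq V] (G : SimpleGraph V)
    [DecidableRel G.Adj] (m : ℕ) :
    cliqueCount G m = (univ.filter (fun s => G.IsNClique m s)).card := by
  rw [cliqueCount, Set.ncard_eq_toFinset_card']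
  congr 1
  ext s
  simp

lemma isNClique_iff (m : ℕ) (s : Finset (Fin w.length)) :
    (thresholdGraph w).IsNClique m s ↔
      (∀ p ∈ s, ∀ q ∈ s, p < q → w.get p = true) ∧ s.card = m := by
  rw [SimpleGraph.isNClique_iff, isClique_iff]

lemma cliqueCount_succ (m : ℕ) :
    cliqueCount (thresholdGraph w) (m + 1) = ∑ j : Fin w.length, (rr w j).choose m := by
  rcases Nat.eq_zero_or_pos w.length with h0 | hpos
  · haveI : IsEmpty (Fin w.length) := ⟨fun p => absurd p.2 (by omega)⟩
    rw [cliqueCount_eq_card]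
    have h1 : ∑ j : Fin w.length, (rr w j).choose m = 0 := by simp
    rw [h1, Finset.card_eq_zero]
    refine Finset.eq_empty_of_forall_notMem ?_
    intro s hs
    rw [Finset.mem_filter, isNClique_iff] at hs
    have hse : s = ∅ := Finset.eq_empty_of_isEmpty s
    rw [hse] at hs
    simp at hs
  · have j0 : Fin w.length := ⟨0, hpos⟩
    set n := w.length with hn
    set G := thresholdGraph w with hG
    set f : Finset (Fin n) → Fin n := fun s => s.max.getD j0 with hf
    rw [cliqueCount_eq_card]
    rw [Finset.card_eq_sum_card_fiberwise (f := f) (t := univ) (fun x _ => mem_univ _)]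
    refine Finset.sum_congr rfl ?_
    intro j _
    rw [rr, ← Finset.card_powersetCard m (Sbelow w j)]
    refine Finset.card_bij' (fun s _ => s.erase j) (fun a _ => insert j a) ?_ ?_ ?_ ?_
    · -- maps to powersetCard
      intro s hs
      rw [Finset.mem_filter, Finset.mem_filter, isNClique_iff] at hs
      obtain ⟨⟨-, ⟨hcl, hcard⟩⟩, hmax⟩ := hs
      have hne : s.Nonempty := by
        rw [← Finset.card_pos, hcard]; omega
      have hmax' : s.max = (s.max' hne : Fin n) := (Finset.coe_max' hne).symm
      have hj : j = s.max' hne := by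
        rw [hf] at hmax; simp only at hmax
        rw [hmax'] at hmax
        exact hmax.symm
      have hjs : j ∈ s := hj ▸ Finset.max'_mem s hne
      rw [Finset.mem_powersetCard]
      constructor
      · intro p hp
        rw [Finset.mem_erase] at hp
        have hple : p ≤ j := hj ▸ Finset.le_max' s p hp.2
        have hplt : p < j := lt_of_le_of_ne hple hp.1
        rw [Sbelow, Finset.mem_filter]
        exact ⟨mem_univ _, hplt, hcl p hp.2 j hjs hplt⟩
      · rw [Finset.card_erase_of_mem hjs, hcard]; omega
    · -- maps back
      intro a ha
      rw [Finset.mem_powersetCard] at ha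
      obtain ⟨hsub, hcard⟩ := ha
      have hnotin : j ∉ a := by
        intro hja
        have := hsub hja
        rw [Sbelow, Finset.mem_filter] at this
        exact lt_irrefl j this.2.1
      have hlt : ∀ p ∈ a, p < j ∧ w.get p = true := by
        intro p hp
        have := hsub hp
        rw [Sbelow, Finset.mem_filter] at this
        exact this.2
      rw [Finset.mem_filter, Finset.mem_filter, isNClique_iff]
      refine ⟨⟨mem_univ _, ?_, ?_⟩, ?_⟩
      · intro p hp q hq hpq
        rcases Finset.mem_insert.1 hp with rfl | hp'
        · rcases Finset.mem_insert.1 hq with rfl | hq'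
          · exact absurd hpq (lt_irrefl _)
          · exact absurd hpq (not_lt.2 (hlt q hq').1.le)
        · exact (hlt p hp').2
      · rw [Finset.card_insert_of_notMem hnotin, hcard]
      · have hne : (insert j a).Nonempty := Finset.insert_nonempty _ _
        have : (insert j a).max' hne = j := by
          apply le_antisymm
          · apply Finset.max'_le
            intro p hp
            rcases Finset.mem_insert.1 hp with rfl | hp'
            · exact le_refl _
            · exact (hlt p hp').1.le
          · exact Finset.le_max' _ _ (Finset.mem_insert_self _ _)
        rw [hf]
        simp only
        rw [← Finset.coe_max' hne, this]
        rfl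
    · -- left inverse
      intro s hs
      rw [Finset.mem_filter] at hs
      obtain ⟨hs1, hmax⟩ := hs
      rw [Finset.mem_filter, isNClique_iff] at hs1
      have hne : s.Nonempty := by
        rw [← Finset.card_pos, hs1.2.2]; omega
      have hmax' : s.max = (s.max' hne : Fin n) := (Finset.coe_max' hne).symm
      have hj : j = s.max' hne := by
        rw [hf] at hmax; simp only at hmax
        rw [hmax'] at hmax
        exact hmax.symm
      have hjs : j ∈ s := hj ▸ Finset.max'_mem s hne
      exact Finset.insert_erase hjs
    · -- right inverse
      intro a ha
      rw [Finset.mem_powersetCard] at ha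
      have hnotin : j ∉ a := by
        intro hja
        have := ha.1 hja
        rw [Sbelow, Finset.mem_filter] at this
        exact lt_irrefl j this.2.1
      exact Finset.erase_insert hnotin

lemma tt_le : tt w ≤ w.length := by
  have := Finset.card_filter_le (univ : Finset (Fin w.length)) (fun p => w.get p = true)
  simpa [tt, Sfin] using this

lemma get_last (hw : IsThresholdWord w) (hpos : 0 < w.length) :
    w.get ⟨w.length - 1, by omega⟩ = true := by
  have hne : w ≠ [] := by
    intro h; rw [h] at hpos; simp at hpos
  have h1 := hw hne
  rw [List.getLast?_eq_getElem?] at h1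
  rw [List.getElem?_eq_getElem (by omega)] at h1
  simpa [List.get_eq_getElem] using h1

lemma Sbelow_subset_Sfin (j : Fin w.length) : Sbelow w j ⊆ Sfin w := by
  intro p hp
  rw [Sbelow, Finset.mem_filter] at hp
  rw [Sfin, Finset.mem_filter]
  exact ⟨hp.1, hp.2.2⟩

lemma rr_lt_tt (hw : IsThresholdWord w) (j : Fin w.length) : rr w j < tt w := by
  have hpos : 0 < w.length := j.pos
  set l : Fin w.length := ⟨w.length - 1, by omega⟩ with hl
  apply Finset.card_lt_card
  constructor
  · exact Sbelow_subset_Sfin w j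
  · intro hsub
    have hls : l ∈ Sfin w := by
      rw [Sfin, Finset.mem_filter]
      exact ⟨mem_univ _, get_last w hw hpos⟩
    have := hsub hls
    rw [Sbelow, Finset.mem_filter] at this
    have hjl : j ≤ l := by
      rw [Fin.le_def]
      have := j.2
      simp only [hl]
      omega
    exact absurd this.2.1 (not_lt.2 hjl)

lemma cliqueNum_eq (hw : IsThresholdWord w) : cliqueNum (thresholdGraph w) = tt w := by
  apply le_antisymm
  · have hne0 : {i : ℕ | ∃ s : Finset (Fin w.length), (thresholdGraph w).IsNClique i s}.Nonempty :=
      ⟨0, ⟨∅, by simp [SimpleGraph.isNClique_empty]⟩⟩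
    apply csSup_le hne0
    rintro i ⟨s, hs⟩
    rw [isNClique_iff] at hs
    rcases s.eq_empty_or_nonempty with rfl | hne
    · simp at hs; omega
    · have hjs : s.max' hne ∈ s := s.max'_mem hne
      have hsub : s.erase (s.max' hne) ⊆ Sbelow w (s.max' hne) := by
        intro p hp
        rw [Finset.mem_erase] at hp
        have hlt : p < s.max' hne := lt_of_le_of_ne (s.le_max' p hp.2) hp.1
        rw [Sbelow, Finset.mem_filter]
        exact ⟨mem_univ _, hlt, hs.1 p hp.2 _ hjs hlt⟩
      have h1 : s.card - 1 ≤ rr w (s.max' hne) := by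
        rw [rr]
        calc s.card - 1 = (s.erase (s.max' hne)).card := by
              rw [Finset.card_erase_of_mem hjs]
          _ ≤ _ := Finset.card_le_card hsub
      have h2 := rr_lt_tt w hw (s.max' hne)
      have h3 : 0 < s.card := Finset.card_pos.2 hne
      omega
  · apply le_csSup
    · refine ⟨w.length, ?_⟩
      rintro i ⟨s, hs⟩
      rw [isNClique_iff] at hs
      rw [← hs.2]
      calc s.card ≤ (univ : Finset (Fin w.length)).card := Finset.card_le_univ s
        _ = w.length := by simp
    · refine ⟨Sfin w, ?_⟩
      rw [isNClique_iff]
      refine ⟨?_, rfl⟩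
      intro p hp q hq _
      rw [Sfin, Finset.mem_filter] at hp
      exact hp.2

def fib (i : ℕ) : Finset (Fin w.length) := univ.filter (fun j => rr w j = i)

lemma exists_rr_eq (i : ℕ) (hi : i < tt w) : ∃ j : Fin w.length, rr w j = i := by
  have e := (Sfin w).orderIsoOfFin (k := tt w) (rfl : (Sfin w).card = tt w)
  refine ⟨(e ⟨i, hi⟩ : { x // x ∈ Sfin w }), ?_⟩
  have hSb : Sbelow w ((e ⟨i, hi⟩ : { x // x ∈ Sfin w }) : Fin w.length) =
      (Sfin w).filter (fun p => p < ((e ⟨i, hi⟩ : { x // x ∈ Sfin w }) : Fin w.length)) := by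
    ext p
    simp only [Sbelow, Sfin, Finset.mem_filter, Finset.mem_univ, true_and]
    tauto
  rw [rr, hSb]
  have hbij : ((Sfin w).filter (fun p => p < ((e ⟨i, hi⟩ : { x // x ∈ Sfin w }) : Fin w.length))).card
      = (Finset.Iio (⟨i, hi⟩ : Fin (tt w))).card := by
    refine Finset.card_bij' (fun p hp => e.symm ⟨p, (Finset.mem_filter.1 hp).1⟩)
      (fun m _ => (e m : { x // x ∈ Sfin w })) ?_ ?_ ?_ ?_
    · intro p hp
      rw [Finset.mem_Iio, ← e.lt_iff_lt, e.apply_symm_apply]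
      exact_mod_cast (Finset.mem_filter.1 hp).2
    · intro m hm
      rw [Finset.mem_Iio] at hm
      rw [Finset.mem_filter]
      refine ⟨(e m).2, ?_⟩
      exact_mod_cast e.strictMono hm
    · intro p hp
      simp
    · intro m hm
      simp
  rw [hbij, Fin.card_Iio]

lemma rr_le_val (j : Fin w.length) : rr w j ≤ j.val := by
  rw [rr]
  calc (Sbelow w j).card ≤ (Finset.Iio j).card := by
        apply Finset.card_le_card
        intro p hp
        rw [Sbelow, Finset.mem_filter] at hp
        rw [Finset.mem_Iio]
        exact hp.2.1
    _ = j.val := Fin.card_Iio j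

lemma next_S (hw : IsThresholdWord w) (j : Fin w.length) :
    ∃ q : Fin w.length, j ≤ q ∧ w.get q = true ∧ rr w q = rr w j := by
  have hpos : 0 < w.length := j.pos
  set l : Fin w.length := ⟨w.length - 1, by omega⟩ with hl
  have hjl : j ≤ l := by
    rw [Fin.le_def]; have := j.2; simp only [hl]; omega
  set A : Finset (Fin w.length) := univ.filter (fun p => j ≤ p ∧ w.get p = true) with hA
  have hAne : A.Nonempty := ⟨l, by
    rw [hA, Finset.mem_filter]
    exact ⟨mem_univ _, hjl, get_last w hw hpos⟩⟩
  set q := A.min' hAne with hq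
  have hqA : q ∈ A := A.min'_mem hAne
  rw [hA, Finset.mem_filter] at hqA
  refine ⟨q, hqA.2.1, hqA.2.2, ?_⟩
  rw [rr, rr]
  congr 1
  ext p
  simp only [Sbelow, Finset.mem_filter, Finset.mem_univ, true_and]
  constructor
  · rintro ⟨hpq, hpS⟩
    refine ⟨?_, hpS⟩
    by_contra hnjp
    push_neg at hnjp
    have hpA : p ∈ A := by
      rw [hA, Finset.mem_filter]
      exact ⟨mem_univ _, hnjp, hpS⟩
    exact absurd (A.min'_le p hpA) (not_le.2 hpq)
  · rintro ⟨hpj, hpS⟩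
    exact ⟨lt_of_lt_of_le hpj hqA.2.1, hpS⟩

lemma card_filter_lt (k : ℕ) (hk : k ≤ w.length) :
    (univ.filter (fun p : Fin w.length => p.val < k)).card = k := by
  have h1 : (univ.filter (fun p : Fin w.length => p.val < k)).card = (Finset.range k).card := by
    refine Finset.card_bij' (fun p _ => p.val) (fun m hm => ⟨m, by
        rw [Finset.mem_range] at hm; omega⟩) ?_ ?_ ?_ ?_
    · intro p hp
      rw [Finset.mem_filter] at hp
      rw [Finset.mem_range]
      exact hp.2
    · intro m hm
      rw [Finset.mem_range] at hm
      rw [Finset.mem_filter]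
      exact ⟨mem_univ _, hm⟩
    · intro p _; rfl
    · intro m _; rfl
  rw [h1, Finset.card_range]

lemma reach_eq_of_isolated {V : Type*} {G : SimpleGraph V} {x y : V}
    (h : G.Reachable x y) (hx : ∀ z, ¬ G.Adj x z) : x = y := by
  obtain ⟨p⟩ := h
  cases p with
  | nil => rfl
  | cons h q => exact absurd h (hx _)

lemma kConnected_of_leading (k : ℕ) (hk : k ≤ tt w)
    (hS : ∀ p : Fin w.length, p.val < k → w.get p = true) :
    KConnected (thresholdGraph w) k := by
  have hkn : k ≤ w.length := le_trans hk (tt_le w)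
  constructor
  · simpa using hkn
  · intro s hs
    have hk0 : 0 < k := lt_of_le_of_lt (Nat.zero_le _) hs
    set F := univ.filter (fun p : Fin w.length => p.val < k) with hF
    have hFcard : F.card = k := card_filter_lt w k hkn
    have hns : ¬ F ⊆ s := by
      intro hsub
      have := Finset.card_le_card hsub
      omega
    obtain ⟨u, huF, hus⟩ := Finset.not_subset.1 hns
    rw [hF, Finset.mem_filter] at huF
    have huk : u.val < k := huF.2
    have hadj : ∀ v : Fin w.length, v ≠ u → (thresholdGraph w).Adj u v := by
      intro v hv
      refine (⟨Ne.symm hv, hS _ ?_⟩ : u ≠ v ∧ w.get (min u v) = true)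
      have h1 : min u v ≤ u := min_le_left u v
      rw [Fin.le_def] at h1
      omega
    have huA : u ∈ ((↑s : Set (Fin w.length))ᶜ) := by
      simpa using hus
    have hreach : ∀ x : ((↑s : Set (Fin w.length))ᶜ : Set (Fin w.length)),
        ((thresholdGraph w).induce ((↑s : Set (Fin w.length))ᶜ)).Reachable x ⟨u, huA⟩ := by
      intro x
      by_cases hxu : (x : Fin w.length) = u
      · have hx : x = ⟨u, huA⟩ := Subtype.ext (by exact hxu)
        rw [hx]
      · exact SimpleGraph.Adj.reachable ((hadj x hxu).symm)
    rw [SimpleGraph.connected_iff]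
    exact ⟨fun x y => (hreach x).trans (hreach y).symm, ⟨⟨u, huA⟩⟩⟩

lemma not_connected_cut (j : Fin w.length) (hj : w.get j = false)
    (q : Fin w.length) (hq : q ≠ j) (hjq : j ≤ q) :
    ¬ ((thresholdGraph w).induce ((↑(Sbelow w j) : Set (Fin w.length))ᶜ)).Connected := by
  intro hcon
  have hjA : j ∈ ((↑(Sbelow w j) : Set (Fin w.length))ᶜ) := by
    simp [Sbelow]
  have hqA : q ∈ ((↑(Sbelow w j) : Set (Fin w.length))ᶜ) := by
    simp only [Set.mem_compl_iff, Finset.coe_filter, Sbelow]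
    intro hmem
    simp only [Set.mem_setOf_eq, Finset.mem_coe, Finset.mem_filter] at hmem
    exact absurd hmem.2.1 (not_lt.2 hjq)
  have hiso : ∀ z, ¬ ((thresholdGraph w).induce ((↑(Sbelow w j) : Set (Fin w.length))ᶜ)).Adj ⟨j, hjA⟩ z := by
    rintro ⟨z, hz⟩ hadj
    obtain ⟨hne, hmin⟩ := (hadj : _ ∧ _)
    simp only [Function.Embedding.coe_subtype] at hne hmin
    have hzj : z ≠ j := by
      intro h
      exact hne (by simp [h])
    rcases lt_or_gt_of_ne hzj with hlt | hgt
    · apply hz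
      simp only [Finset.coe_filter, Sbelow, Set.mem_setOf_eq, Finset.mem_univ, true_and]
      refine ⟨hlt, ?_⟩
      have hm2 : min (j : Fin w.length) z = z := min_eq_right hlt.le
      rwa [hm2] at hmin
    · have hm2 : min (j : Fin w.length) z = j := min_eq_left hgt.le
      rw [hm2] at hmin
      rw [hmin] at hj
      simp at hj
  have h := reach_eq_of_isolated (hcon.preconnected ⟨j, hjA⟩ ⟨q, hqA⟩) hiso
  exact hq (by simpa using h.symm)

lemma leading_of_kConnected (hw : IsThresholdWord w) (k : ℕ)
    (hcon : KConnected (thresholdGraph w) k) :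
    ∀ p : Fin w.length, p.val < k → w.get p = true := by
  intro j hjk
  by_contra hj
  have hjf : w.get j = false := by
    simpa using hj
  have hcard : (Sbelow w j).card < k := lt_of_le_of_lt (rr_le_val w j) hjk
  have hconn := hcon.2 (Sbelow w j) hcard
  obtain ⟨q, hjq, hqS, -⟩ := next_S w hw j
  have hqj : q ≠ j := by
    intro h
    rw [h, hjf] at hqS
    exact Bool.false_ne_true hqS
  exact not_connected_cut w j hjf q hqj hjq hconn

lemma rr_eq_val_of_le (k : ℕ) (hS : ∀ p : Fin w.length, p.val < k → w.get p = true)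
    (j : Fin w.length) (hj : j.val ≤ k) : rr w j = j.val := by
  rw [rr]
  have : Sbelow w j = Finset.Iio j := by
    ext p
    rw [Sbelow, Finset.mem_filter, Finset.mem_Iio]
    constructor
    · rintro ⟨-, h1, -⟩; exact h1
    · intro h1
      have : p.val < k := by
        rw [Fin.lt_def] at h1; omega
      exact ⟨mem_univ _, h1, hS p this⟩
  rw [this, Fin.card_Iio]

lemma k_le_rr (k : ℕ) (hS : ∀ p : Fin w.length, p.val < k → w.get p = true)
    (j : Fin w.length) (hj : k ≤ j.val) : k ≤ rr w j := by
  have hkn : k ≤ w.length := le_trans hj (by omega)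
  rw [rr, ← card_filter_lt w k hkn]
  apply Finset.card_le_card
  intro p hp
  rw [Finset.mem_filter] at hp
  rw [Sbelow, Finset.mem_filter]
  refine ⟨mem_univ _, ?_, hS p hp.2⟩
  rw [Fin.lt_def]
  omega

lemma fib_card_of_leading (k : ℕ) (hkn : k ≤ w.length)
    (hS : ∀ p : Fin w.length, p.val < k → w.get p = true)
    (i : ℕ) (hi : i < k) : (fib w i).card = 1 := by
  have hin : i < w.length := lt_of_lt_of_le hi hkn
  have : fib w i = {⟨i, hin⟩} := by
    ext j
    rw [fib, Finset.mem_filter, Finset.mem_singleton]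
    constructor
    · rintro ⟨-, hrr⟩
      rcases le_or_gt j.val k with hle | hgt
      · have := rr_eq_val_of_le w k hS j hle
        rw [this] at hrr
        exact Fin.ext hrr
      · have := k_le_rr w k hS j hgt.le
        omega
    · rintro rfl
      exact ⟨mem_univ _, by rw [rr_eq_val_of_le w k hS _ (le_of_lt hi)]⟩
  rw [this, Finset.card_singleton]

lemma leading_of_fib (hw : IsThresholdWord w) (k : ℕ)
    (hfib : ∀ i < k, (fib w i).card ≤ 1) :
    ∀ p : Fin w.length, p.val < k → w.get p = true := by
  intro j hjk
  by_contra hj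
  have hjf : w.get j = false := by simpa using hj
  obtain ⟨q, hjq, hqS, hqr⟩ := next_S w hw j
  have hqj : q ≠ j := by
    intro h
    rw [h, hjf] at hqS
    exact Bool.false_ne_true hqS
  have hsub : {j, q} ⊆ fib w (rr w j) := by
    intro p hp
    rw [Finset.mem_insert, Finset.mem_singleton] at hp
    rw [fib, Finset.mem_filter]
    rcases hp with rfl | rfl
    · exact ⟨mem_univ _, rfl⟩
    · exact ⟨mem_univ _, hqr⟩
  have h2 : 2 ≤ (fib w (rr w j)).card := by
    calc 2 = ({j, q} : Finset (Fin w.length)).card := by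
          rw [Finset.card_insert_of_notMem (by simpa using (Ne.symm hqj)), Finset.card_singleton]
      _ ≤ _ := Finset.card_le_card hsub
  have := hfib (rr w j) (lt_of_le_of_lt (rr_le_val w j) hjk)
  omega

open Polynomial

lemma binom_sum (d a : ℕ) (ha : a < d) :
    ∑ m : Fin d, (Polynomial.C ((a.choose (m : ℕ) : ℤ))) * (Polynomial.X - 1) ^ (m : ℕ)
      = (Polynomial.X : Polynomial ℤ) ^ a := by
  have h1 : ((Polynomial.X - 1 : Polynomial ℤ) + 1) ^ a = Polynomial.X ^ a := by
    ring_nf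
  rw [← h1, add_pow]
  rw [Fin.sum_univ_eq_sum_range
    (fun m => (Polynomial.C ((a.choose m : ℤ))) * (Polynomial.X - 1) ^ m) d]
  rw [← Finset.sum_subset (Finset.range_subset_range.2 (by omega : a + 1 ≤ d))]
  · apply Finset.sum_congr rfl
    intro m hm
    rw [Finset.mem_range] at hm
    simp only [one_pow, mul_one]
    rw [Polynomial.C_eq_natCast, mul_comm]
  · intro m hm hnm
    rw [Finset.mem_range] at hm hnm
    have : a.choose m = 0 := Nat.choose_eq_zero_of_lt (by omega)
    simp [this]

lemma sum_clique_poly (d : ℕ) (hd : ∀ j : Fin w.length, rr w j < d) :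
    ∑ m : Fin d, Polynomial.C ((cliqueCount (thresholdGraph w) ((m : ℕ) + 1) : ℤ))
        * (Polynomial.X - 1) ^ (m : ℕ)
      = ∑ j : Fin w.length, (Polynomial.X : Polynomial ℤ) ^ (rr w j) := by
  have h1 : ∀ m : Fin d, (Polynomial.C ((cliqueCount (thresholdGraph w) ((m : ℕ) + 1) : ℤ)))
      = ∑ j : Fin w.length, Polynomial.C ((rr w j).choose (m : ℕ) : ℤ) := by
    intro m
    rw [cliqueCount_succ]
    push_cast
    rw [map_sum]
  calc ∑ m : Fin d, Polynomial.C ((cliqueCount (thresholdGraph w) ((m : ℕ) + 1) : ℤ))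
        * (Polynomial.X - 1) ^ (m : ℕ)
      = ∑ m : Fin d, ∑ j : Fin w.length,
          Polynomial.C ((rr w j).choose (m : ℕ) : ℤ) * (Polynomial.X - 1) ^ (m : ℕ) := by
        apply Finset.sum_congr rfl
        intro m _
        rw [h1 m, Finset.sum_mul]
    _ = ∑ j : Fin w.length, ∑ m : Fin d,
          Polynomial.C ((rr w j).choose (m : ℕ) : ℤ) * (Polynomial.X - 1) ^ (m : ℕ) :=
        Finset.sum_comm
    _ = ∑ j : Fin w.length, (Polynomial.X : Polynomial ℤ) ^ (rr w j) := by
        apply Finset.sum_congr rfl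
        intro j _
        exact binom_sum d (rr w j) (hd j)

lemma coeff_sum_CXpow (d : ℕ) (b : Fin d → ℤ) (i : ℕ) (hi : i < d) :
    (∑ m : Fin d, Polynomial.C (b m) * Polynomial.X ^ (m : ℕ)).coeff i = b ⟨i, hi⟩ := by
  rw [Polynomial.finset_sum_coeff]
  rw [Finset.sum_eq_single (⟨i, hi⟩ : Fin d)]
  · simp
  · intro m _ hm
    rw [Polynomial.coeff_C_mul, Polynomial.coeff_X_pow]
    have : ¬ (i = (m : ℕ)) := by
      intro h
      exact hm (Fin.ext h.symm)
    rw [if_neg this, mul_zero]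
  · intro h
    exact absurd (mem_univ _) h

lemma coeff_sum_Xrr (i : ℕ) :
    (∑ j : Fin w.length, (Polynomial.X : Polynomial ℤ) ^ (rr w j)).coeff i
      = ((fib w i).card : ℤ) := by
  rw [Polynomial.finset_sum_coeff]
  have h1 : ∀ j : Fin w.length, ((Polynomial.X : Polynomial ℤ) ^ (rr w j)).coeff i
      = if i = rr w j then (1 : ℤ) else 0 := by
    intro j
    rw [Polynomial.coeff_X_pow]
  rw [Finset.sum_congr rfl (fun j _ => h1 j), Finset.sum_boole]
  have h2 : univ.filter (fun j : Fin w.length => i = rr w j) = fib w i := by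
    rw [fib]
    apply Finset.filter_congr
    intro j _
    simp [eq_comm]
  rw [h2]

lemma poly_basis_inj (d : ℕ) (α β : Fin d → ℤ)
    (h : ∑ m : Fin d, Polynomial.C (α m) * (Polynomial.X - 1) ^ (m : ℕ)
        = ∑ m : Fin d, Polynomial.C (β m) * (Polynomial.X - 1) ^ (m : ℕ)) :
    ∀ m, α m = β m := by
  have h2 : ∑ m : Fin d, Polynomial.C (α m) * Polynomial.X ^ (m : ℕ)
      = ∑ m : Fin d, Polynomial.C (β m) * Polynomial.X ^ (m : ℕ) := by
    have h3 := congrArg (Polynomial.aeval (Polynomial.X + 1 : Polynomial ℤ)) h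
    simpa [map_sum, map_mul, map_pow, map_sub, Polynomial.aeval_X, Polynomial.aeval_C,
      Polynomial.algebraMap_eq, add_sub_cancel_right] using h3
  intro m
  have h4 := congrArg (fun p => p.coeff (m : ℕ)) h2
  rw [coeff_sum_CXpow d α (m : ℕ) m.2, coeff_sum_CXpow d β (m : ℕ) m.2] at h4
  simpa using h4

section IsoTransfer

variable {V W : Type*} {G : SimpleGraph V} {H : SimpleGraph W}

lemma isNClique_image [DecidableEq W] (e : G ≃g H) {i : ℕ} {s : Finset V}
    (h : G.IsNClique i s) : H.IsNClique i (s.image e) := by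
  constructor
  · intro x hx y hy hxy
    rw [Finset.coe_image, Set.mem_image] at hx hy
    obtain ⟨p, hp, rfl⟩ := hx
    obtain ⟨q, hq, rfl⟩ := hy
    have hpq : p ≠ q := fun hh => hxy (by rw [hh])
    exact e.map_rel_iff.2 (h.1 hp hq hpq)
  · rw [Finset.card_image_of_injective _ e.injective, h.2]

lemma cliqueCount_iso [DecidableEq V] [DecidableEq W] (e : G ≃g H) (i : ℕ) :
    cliqueCount G i = cliqueCount H i := by
  rw [cliqueCount, cliqueCount]
  have himg : {s : Finset W | H.IsNClique i s}
      = (fun s : Finset V => s.image e) '' {s : Finset V | G.IsNClique i s} := by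
    ext t
    constructor
    · intro ht
      refine ⟨t.image e.symm, isNClique_image e.symm ht, ?_⟩
      ext x
      simp [Finset.mem_image]
    · rintro ⟨s, hs, rfl⟩
      exact isNClique_image e hs
  rw [himg, Set.ncard_image_of_injective]
  intro s t hst
  have h3 := congrArg (fun u : Finset W => u.image e.symm) hst
  simp only [Finset.image_image] at h3
  have h4 : ∀ u : Finset V, u.image (⇑e.symm ∘ ⇑e) = u := by
    intro u
    ext x
    simp [Finset.mem_image]
  rwa [h4, h4] at h3

lemma cliqueNum_iso (e : G ≃g H) : cliqueNum G = cliqueNum H := by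
  classical
  rw [cliqueNum, cliqueNum]
  congr 1
  ext i
  constructor
  · rintro ⟨s, hs⟩
    exact ⟨s.image e, isNClique_image e hs⟩
  · rintro ⟨t, ht⟩
    exact ⟨t.image e.symm, isNClique_image e.symm ht⟩

lemma kConnected_iso [Fintype V] [Fintype W] (e : G ≃g H) (k : ℕ)
    (h : KConnected G k) : KConnected H k := by
  classical
  constructor
  · rw [← Fintype.card_congr e.toEquiv]
    exact h.1
  · intro s hs
    have hcard : (s.image e.symm).card < k := by
      rw [Finset.card_image_of_injective _ e.symm.injective]
      exact hs
    have h2 := h.2 (s.image e.symm) hcard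
    have hprop : ∀ x : V, x ∈ ((↑(s.image e.symm) : Set V)ᶜ) ↔ e x ∈ ((↑s : Set W)ᶜ) := by
      intro x
      simp only [Set.mem_compl_iff, Finset.coe_image, Set.mem_image, Finset.mem_coe]
      constructor
      · intro hx hex
        exact hx ⟨e x, hex, by simp⟩
      · rintro hx ⟨y, hy, hyx⟩
        apply hx
        have : e x = y := by
          rw [← hyx]
          simp
        rwa [this]
    let e' : G.induce ((↑(s.image e.symm) : Set V)ᶜ) ≃g H.induce ((↑s : Set W)ᶜ) :=
      { toEquiv := Equiv.subtypeEquiv e.toEquiv hprop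
        map_rel_iff' := fun {a b} => e.map_rel_iff }
    exact (SimpleGraph.Iso.connected_iff e').mp h2

end IsoTransfer

section Construction

variable (d : ℕ) (a : ℕ → ℕ)

def PP (m : ℕ) : ℕ := ∑ i ∈ Finset.range m, a i

lemma PP_succ (m : ℕ) : PP a (m + 1) = PP a m + a m := Finset.sum_range_succ a m

lemma PP_mono : Monotone (PP a) := by
  intro x y hxy
  exact Finset.sum_le_sum_of_subset (Finset.range_subset_range.2 hxy)

variable (hpos : ∀ i < d, 0 < a i)

include hpos in
lemma PP_lt (i1 i2 : ℕ) (h : i1 < i2) (h2 : i2 ≤ d) : PP a i1 < PP a i2 := by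
  have h3 : PP a i1 < PP a (i1 + 1) := by
    rw [PP_succ]
    have := hpos i1 (by omega)
    omega
  exact lt_of_lt_of_le h3 (PP_mono a (by omega))

lemma PP_block (v : ℕ) : ∀ m, v < PP a m → ∃ i < m, PP a i ≤ v ∧ v < PP a (i + 1) := by
  intro m
  induction m with
  | zero => intro h; simp [PP] at h
  | succ m ih =>
    intro h
    rcases le_or_gt (PP a m) v with h1 | h1
    · exact ⟨m, by omega, h1, h⟩
    · obtain ⟨i, hi, h2, h3⟩ := ih h1
      exact ⟨i, by omega, h2, h3⟩

def ff : Fin (PP a d) → Bool := fun j => decide (∃ i, i < d ∧ (j : ℕ) + 1 = PP a (i + 1))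

def ww : List Bool := List.ofFn (ff d a)

lemma ww_length : (ww d a).length = PP a d := List.length_ofFn

lemma ww_get (j : Fin (ww d a).length) :
    (ww d a).get j = ff d a ⟨j.val, by rw [← ww_length d a]; exact j.2⟩ := by
  rw [List.get_eq_getElem]
  exact List.getElem_ofFn _

lemma ww_get_iff (j : Fin (ww d a).length) :
    (ww d a).get j = true ↔ ∃ i, i < d ∧ (j : ℕ) + 1 = PP a (i + 1) := by
  rw [ww_get, ff]
  simp

include hpos in
lemma ww_threshold : IsThresholdWord (ww d a) := by
  intro hne
  have hlen : 0 < (ww d a).length := List.length_pos_iff.2 hne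
  have hn : 0 < PP a d := by rw [← ww_length d a]; exact hlen
  have hd : 0 < d := by
    by_contra hd0
    push_neg at hd0
    interval_cases d
    simp [PP] at hn
  rw [List.getLast?_eq_getElem?, List.getElem?_eq_getElem (by omega)]
  congr 1
  have : (ww d a)[(ww d a).length - 1] = (ww d a).get ⟨(ww d a).length - 1, by omega⟩ := rfl
  rw [this, ww_get_iff]
  refine ⟨d - 1, by omega, ?_⟩
  have h1 : (ww d a).length = PP a d := ww_length d a
  have h2 : d - 1 + 1 = d := by omega
  rw [h2]
  simp only
  omega

include hpos in
lemma countS (v : ℕ) (hv : v ≤ PP a d) :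
    ((univ : Finset (Fin (ww d a).length)).filter
        (fun p => p.val < v ∧ (ww d a).get p = true)).card
      = ((Finset.range d).filter (fun i => PP a (i + 1) ≤ v)).card := by
  have hlen : (ww d a).length = PP a d := ww_length d a
  refine Finset.card_bij' (fun p hp => ?_) (fun i hi => (⟨PP a (i + 1) - 1, ?_⟩ : Fin (ww d a).length)) ?_ ?_ ?_ ?_
  · -- forward map: the unique i for p
    exact Nat.find (p := fun i => i < d ∧ (p : ℕ) + 1 = PP a (i + 1))
      (by
        have hp2 := (Finset.mem_filter.1 hp).2
        exact (ww_get_iff d a p).1 hp2.2)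
  · -- inverse map well-defined: PP a (i+1) - 1 < length
    rw [Finset.mem_filter, Finset.mem_range] at hi
    have h1 : 0 < PP a (i + 1) := by
      have := PP_lt d a hpos i (i+1) (by omega) (by omega)
      omega
    have h2 : PP a (i + 1) ≤ PP a d := PP_mono a (by omega)
    omega
  · -- forward lands in range filter
    intro p hp
    have hspec := Nat.find_spec (p := fun i => i < d ∧ (p : ℕ) + 1 = PP a (i + 1))
      (by
        have hp2 := (Finset.mem_filter.1 hp).2
        exact (ww_get_iff d a p).1 hp2.2)
    beta_reduce
    rw [Finset.mem_filter, Finset.mem_range]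
    have hp2 := (Finset.mem_filter.1 hp).2
    exact ⟨hspec.1, by omega⟩
  · -- inverse lands in filter
    intro i hi
    rw [Finset.mem_filter, Finset.mem_range] at hi
    have h1 : 0 < PP a (i + 1) := by
      have := PP_lt d a hpos i (i+1) (by omega) (by omega)
      omega
    rw [Finset.mem_filter]
    refine ⟨mem_univ _, by simp; omega, ?_⟩
    rw [ww_get_iff]
    exact ⟨i, hi.1, by simp; omega⟩
  · -- left inverse
    intro p hp
    have hspec := Nat.find_spec (p := fun i => i < d ∧ (p : ℕ) + 1 = PP a (i + 1))
      (by
        have hp2 := (Finset.mem_filter.1 hp).2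
        exact (ww_get_iff d a p).1 hp2.2)
    beta_reduce
    apply Fin.ext
    simp only
    omega
  · -- right inverse
    intro i hi
    rw [Finset.mem_filter, Finset.mem_range] at hi
    have h1 : 0 < PP a (i + 1) := by
      have := PP_lt d a hpos i (i+1) (by omega) (by omega)
      omega
    -- Nat.find at position PP a (i+1) - 1 equals i, by uniqueness
    beta_reduce
    have hex : ∃ i', i' < d ∧ (PP a (i+1) - 1) + 1 = PP a (i' + 1) := ⟨i, hi.1, by omega⟩
    have hspec := Nat.find_spec (p := fun i' => i' < d ∧ (PP a (i+1) - 1) + 1 = PP a (i' + 1)) hex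
    set i' := Nat.find (p := fun i' => i' < d ∧ (PP a (i+1) - 1) + 1 = PP a (i' + 1)) hex with hi'
    have heq : PP a (i' + 1) = PP a (i + 1) := by omega
    have : i' = i := by
      by_contra hne
      rcases lt_or_gt_of_ne hne with hlt | hgt
      · have := PP_lt d a hpos (i' + 1) (i + 1) (by omega) (by omega)
        omega
      · have := PP_lt d a hpos (i + 1) (i' + 1) (by omega) (by omega)
        omega
    exact this

end Construction

section Construction2

variable (d : ℕ) (a : ℕ → ℕ) (hpos : ∀ i < d, 0 < a i)

include hpos in
lemma rr_ww (j : Fin (ww d a).length) :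
    rr (ww d a) j = ((Finset.range d).filter (fun i => PP a (i + 1) ≤ j.val)).card := by
  rw [rr]
  have h1 : Sbelow (ww d a) j
      = (univ.filter (fun p => p.val < j.val ∧ (ww d a).get p = true)) := by
    rw [Sbelow]
    apply Finset.filter_congr
    intro p _
    rw [Fin.lt_def]
  rw [h1]
  exact countS d a hpos j.val (by
    have := j.2
    have h2 := ww_length d a
    omega)

lemma thresh_filter (i v : ℕ) (hi : i < d) (h1 : PP a i ≤ v) (h2 : v < PP a (i + 1)) :
    (Finset.range d).filter (fun i' => PP a (i' + 1) ≤ v) = Finset.range i := by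
  ext i'
  rw [Finset.mem_filter, Finset.mem_range, Finset.mem_range]
  constructor
  · rintro ⟨hd', hle⟩
    by_contra hge
    push_neg at hge
    have : PP a (i + 1) ≤ PP a (i' + 1) := PP_mono a (by omega)
    omega
  · intro hlt
    refine ⟨by omega, ?_⟩
    calc PP a (i' + 1) ≤ PP a i := PP_mono a (by omega)
      _ ≤ v := h1

include hpos in
lemma rr_block (j : Fin (ww d a).length) (i : ℕ) (hi : i < d)
    (h1 : PP a i ≤ j.val) (h2 : j.val < PP a (i + 1)) : rr (ww d a) j = i := by
  rw [rr_ww d a hpos j, thresh_filter d a i j.val hi h1 h2, Finset.card_range]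

include hpos in
lemma exists_block (j : Fin (ww d a).length) :
    ∃ i < d, PP a i ≤ j.val ∧ j.val < PP a (i + 1) := by
  apply PP_block
  have := j.2
  have h2 := ww_length d a
  omega

include hpos in
lemma rr_ww_lt (j : Fin (ww d a).length) : rr (ww d a) j < d := by
  obtain ⟨i, hi, h1, h2⟩ := exists_block d a hpos j
  rw [rr_block d a hpos j i hi h1 h2]
  exact hi

include hpos in
lemma fib_ww (i : ℕ) (hi : i < d) : (fib (ww d a) i).card = a i := by
  have hset : fib (ww d a) i
      = univ.filter (fun j : Fin (ww d a).length => PP a i ≤ j.val ∧ j.val < PP a (i + 1)) := by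
    rw [fib]
    apply Finset.filter_congr
    intro j _
    constructor
    · intro hrr
      obtain ⟨i', hi', h1, h2⟩ := exists_block d a hpos j
      have := rr_block d a hpos j i' hi' h1 h2
      rw [hrr] at this
      rw [← this] at h1 h2
      exact ⟨by simpa using h1, by simpa using h2⟩
    · rintro ⟨h1, h2⟩
      exact rr_block d a hpos j i hi (by simpa using h1) (by simpa using h2)
  rw [hset]
  have hcard : (univ.filter (fun j : Fin (ww d a).length =>
      PP a i ≤ j.val ∧ j.val < PP a (i + 1))).card
      = (Finset.Ico (PP a i) (PP a (i + 1))).card := by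
    refine Finset.card_bij' (fun j _ => j.val) (fun m hm => ⟨m, ?_⟩) ?_ ?_ ?_ ?_
    · rw [Finset.mem_Ico] at hm
      rw [ww_length d a]
      have : PP a (i + 1) ≤ PP a d := PP_mono a (by omega)
      omega
    · intro j hj
      rw [Finset.mem_filter] at hj
      rw [Finset.mem_Ico]
      exact hj.2
    · intro m hm
      rw [Finset.mem_Ico] at hm
      rw [Finset.mem_filter]
      exact ⟨mem_univ _, hm.1, hm.2⟩
    · intro j _; rfl
    · intro m _; rfl
  rw [hcard, Nat.card_Ico, PP_succ]
  omega

include hpos in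
lemma tt_ww : tt (ww d a) = d := by
  rw [tt]
  have h1 : Sfin (ww d a)
      = univ.filter (fun p : Fin (ww d a).length =>
          p.val < PP a d ∧ (ww d a).get p = true) := by
    rw [Sfin]
    apply Finset.filter_congr
    intro p _
    have hp : p.val < PP a d := by
      have := p.2
      have h2 := ww_length d a
      omega
    simp [hp]
  rw [h1, countS d a hpos (PP a d) (le_refl _)]
  have h2 : (Finset.range d).filter (fun i => PP a (i + 1) ≤ PP a d) = Finset.range d := by
    apply Finset.filter_true_of_mem
    intro i hi
    rw [Finset.mem_range] at hi
    exact PP_mono a (by omega)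
  rw [h2, Finset.card_range]

end Construction2

lemma coeff_sum_CXpow_ge (d : ℕ) (b : Fin d → ℤ) (i : ℕ) (hi : d ≤ i) :
    (∑ m : Fin d, Polynomial.C (b m) * Polynomial.X ^ (m : ℕ)).coeff i = 0 := by
  rw [Polynomial.finset_sum_coeff]
  apply Finset.sum_eq_zero
  intro m _
  rw [Polynomial.coeff_C_mul, Polynomial.coeff_X_pow]
  have h2 := m.2
  rw [if_neg (by omega), mul_zero]

end TAux

open TAux Polynomial in
/-- characterization of clique vectors of `k`-connected threshold
graphs. -/
theorem clique_vectors_of_kConnected_threshold (d k : ℕ) (hk : k ≤ d)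
    (c : Fin d → ℕ) (hc : ∀ i, 0 < c i) (b : Fin d → ℤ)
    (hb : ∑ i : Fin d, Polynomial.C (b i) * Polynomial.X ^ (i : ℕ) =
        ∑ i : Fin d, Polynomial.C ((c i : ℤ)) * (Polynomial.X - 1) ^ (i : ℕ)) :
    (∃ (n : ℕ) (G : SimpleGraph (Fin n)), IsThresholdGraph G ∧ KConnected G k ∧
        cliqueNum G = d ∧ ∀ i : Fin d, cliqueCount G ((i : ℕ) + 1) = c i) ↔
      (∀ i, 0 < b i) ∧ (∀ i : Fin d, (i : ℕ) < k → b i = 1) := by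
  
  classical
  constructor
  · rintro ⟨n, G, ⟨w, hw, ⟨e⟩⟩, hcon, hnum, hcount⟩
    have hGt : cliqueNum G = tt w := (cliqueNum_iso e).trans (cliqueNum_eq w hw)
    have htt : tt w = d := by rw [← hGt, hnum]
    have hd : ∀ j, rr w j < d := fun j => htt ▸ rr_lt_tt w hw j
    have hpoly : ∑ m : Fin d, Polynomial.C ((c m : ℤ)) * (Polynomial.X - 1) ^ (m : ℕ)
        = ∑ j : Fin w.length, (Polynomial.X : Polynomial ℤ) ^ rr w j := by
      rw [← sum_clique_poly w d hd]
      apply Finset.sum_congr rfl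
      intro m _
      rw [← cliqueCount_iso e, hcount m]
    have hbX : ∑ i : Fin d, Polynomial.C (b i) * Polynomial.X ^ (i : ℕ)
        = ∑ j : Fin w.length, (Polynomial.X : Polynomial ℤ) ^ rr w j := hb.trans hpoly
    have hfib : ∀ i : Fin d, b i = ((fib w (i : ℕ)).card : ℤ) := by
      intro i
      have h4 := congrArg (fun p : Polynomial ℤ => p.coeff (i : ℕ)) hbX
      rw [coeff_sum_CXpow d b (i : ℕ) i.2, coeff_sum_Xrr w (i : ℕ)] at h4
      simpa using h4
    constructor
    · intro i
      obtain ⟨j, hj⟩ := exists_rr_eq w (i : ℕ) (by rw [htt]; exact i.2)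
      have hpos : 0 < (fib w (i : ℕ)).card :=
        Finset.card_pos.2 ⟨j, by rw [fib, Finset.mem_filter]; exact ⟨Finset.mem_univ _, hj⟩⟩
      rw [hfib i]
      exact_mod_cast hpos
    · intro i hik
      have hconw : KConnected (thresholdGraph w) k := kConnected_iso e k hcon
      have hlead := leading_of_kConnected w hw k hconw
      have hkn : k ≤ w.length := by
        have h1 := tt_le w
        omega
      have h2 := fib_card_of_leading w k hkn hlead (i : ℕ) hik
      rw [hfib i, h2]
      rfl
  · rintro ⟨hbpos, hbk⟩
    set aa : ℕ → ℕ := fun i => if h : i < d then (b ⟨i, h⟩).toNat else 0 with haa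
    have hapos : ∀ i < d, 0 < aa i := by
      intro i hi
      rw [haa]
      simp only [hi, dif_pos]
      have := hbpos ⟨i, hi⟩
      omega
    have hw := ww_threshold d aa hapos
    have htt := tt_ww d aa hapos
    have hfib : ∀ i : ℕ, (hi : i < d) → ((fib (ww d aa) i).card : ℤ) = b ⟨i, hi⟩ := by
      intro i hi
      rw [fib_ww d aa hapos i hi, haa]
      simp only [hi, dif_pos]
      exact Int.toNat_of_nonneg (hbpos ⟨i, hi⟩).le
    refine ⟨(ww d aa).length, thresholdGraph (ww d aa),
      ⟨ww d aa, hw, ⟨RelIso.refl _⟩⟩, ?_, ?_, ?_⟩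
    · apply kConnected_of_leading (ww d aa) k (by omega)
      apply leading_of_fib (ww d aa) hw k
      intro i hik
      have hid : i < d := lt_of_lt_of_le hik hk
      have h1 := hfib i hid
      have h2 := hbk ⟨i, hid⟩ hik
      rw [h2] at h1
      omega
    · rw [cliqueNum_eq (ww d aa) hw, htt]
    · intro m
      have hd2 : ∀ j, rr (ww d aa) j < d := rr_ww_lt d aa hapos
      have hbX : ∑ i : Fin d, Polynomial.C (b i) * Polynomial.X ^ (i : ℕ)
          = ∑ j : Fin (ww d aa).length, (Polynomial.X : Polynomial ℤ) ^ rr (ww d aa) j := by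
        apply Polynomial.ext
        intro i0
        rw [coeff_sum_Xrr (ww d aa) i0]
        rcases lt_or_ge i0 d with hi0 | hi0
        · rw [coeff_sum_CXpow d b i0 hi0]
          exact (hfib i0 hi0).symm
        · rw [coeff_sum_CXpow_ge d b i0 hi0]
          have hemp : fib (ww d aa) i0 = ∅ := by
            apply Finset.eq_empty_of_forall_notMem
            intro j hj
            rw [fib, Finset.mem_filter] at hj
            have := hd2 j
            omega
          rw [hemp]
          simp
      have hch : ∑ m' : Fin d,
            Polynomial.C ((cliqueCount (thresholdGraph (ww d aa)) ((m' : ℕ) + 1) : ℤ))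
              * (Polynomial.X - 1) ^ (m' : ℕ)
          = ∑ m' : Fin d, Polynomial.C ((c m' : ℤ)) * (Polynomial.X - 1) ^ (m' : ℕ) := by
        rw [sum_clique_poly (ww d aa) d hd2, ← hbX, ← hb]
      have h5 := poly_basis_inj d _ _ hch m
      exact_mod_cast h5
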